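/- For ℙ-a.e. γ, for every integer k ≥ 1 and every site x ∈ ℤ^d, the connected component of x in ℝ^d ∖ ∪_{j > k} W_j(γ) is a bounded subset of ℝ^d; that is, almost surely all k-blobs containing lattice points are bounded. -/

import Mathlib

open MeasureTheory ENNReal

noncomputable section

/-- Sites: the lattice `ℤ^d`. -/
abbrev Site (d : ℕ) := Fin d → ℤ

/-- Configurations: elements of `{0,1}^{ℤ^d}`, encoded with `Bool`. -/
abbrev Config (d : ℕ) := Site d → Bool

/-- The translation `θ^z` acting on configurations: `(θ^z γ)(x) = γ(x - z)`. -/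
def shiftCfg {d : ℕ} (z : Site d) (γ : Config d) : Config d := fun x => γ (x - z)

/-- `φ` is a matching on `γ`: an involutive bijection matching ones to zeros. -/
def IsMatching {d : ℕ} (γ : Config d) (φ : Site d → Site d) : Prop :=
  Function.Bijective φ ∧ (∀ x, φ (φ x) = x) ∧ ∀ x, γ (φ x) = !(γ x)

/-- `Φ` is a matching rule with respect to the measure `P`. -/
def IsMatchingRule {d : ℕ} (P : Measure (Config d)) (Φ : Config d → Site d → Site d) : Prop :=
  (∀ x : Site d, Measurable fun γ => Φ γ x) ∧ ∀ᵐ γ ∂P, IsMatching γ (Φ γ)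

/-- `Φ` is translation-equivariant with respect to `P`. -/
def IsEquivariant {d : ℕ} (P : Measure (Config d)) (Φ : Config d → Site d → Site d) : Prop :=
  ∀ z x : Site d, ∀ᵐ γ ∂P, Φ (shiftCfg z γ) (x + z) = Φ γ x + z

/-- `P` is the product measure with i.i.d. Bernoulli(1/2) coordinates, characterized by
its values on cylinder events. -/
def IsBernoulliHalfProduct {d : ℕ} (P : Measure (Config d)) : Prop :=
  IsProbabilityMeasure P ∧
    ∀ (s : Finset (Site d)) (f : Site d → Bool),
      P {γ | ∀ x ∈ s, γ x = f x} = (1 / 2 : ℝ≥0∞) ^ s.card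

/-- `Z_Φ(γ) = ‖Φ(γ, 0)‖`, the `ℓ^∞` distance from the origin to its partner. -/
def ZΦ {d : ℕ} (Φ : Config d → Site d → Site d) (γ : Config d) : ℝ := ‖Φ γ 0‖

/-- Embedding of the lattice in `ℝ^d`. -/
def toR {d : ℕ} (x : Site d) : Fin d → ℝ := fun i => (x i : ℝ)

/-- The first standard basis vector `e₁`. -/
def e1 (d : ℕ) : Site d := fun i => if (i : ℕ) = 0 then 1 else 0

/-- `x` is a `k`-seed for `γ`. -/
def IsSeed {d : ℕ} (γ : Config d) (k : ℕ) (x : Site d) : Prop :=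
  γ x = true ∧ ∀ n : ℕ, 1 ≤ n → n ≤ k - 1 → γ (x + (n : ℤ) • e1 d) = false

/-- `r_k = (2^k k²)^{1/d} + 1/2`. -/
def rr (d k : ℕ) : ℝ := ((2 : ℝ) ^ k * (k : ℝ) ^ 2) ^ ((d : ℝ)⁻¹) + 1 / 2

/-- The shift `s_k = ⌊100 r_k⌋ e₁`. -/
def ss (d k : ℕ) : Site d := ⌊(100 : ℝ) * rr d k⌋ • e1 d

/-- `W_k(γ)`: the union of all `k`-cutters. -/
def cutters {d : ℕ} (γ : Config d) (k : ℕ) : Set (Fin d → ℝ) :=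
  ⋃ x ∈ {x : Site d | IsSeed γ k (x - ss d k)}, {y : Fin d → ℝ | ‖y - toR x‖ = rr d k}

/-- The `k`-blob containing the point `p ∈ ℝ^d`: the connected component of `p` in the
complement of all `j`-cutters with `j > k`. -/
def blob {d : ℕ} (γ : Config d) (k : ℕ) (p : Fin d → ℝ) : Set (Fin d → ℝ) :=
  connectedComponentIn (⋃ j ∈ {j : ℕ | k < j}, cutters γ j)ᶜ p

/-- The `k`-clump of a site `x`: the lattice points of the `k`-blob containing `x`. -/
def clump {d : ℕ} (γ : Config d) (k : ℕ) (x : Site d) : Set (Site d) :=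
  {y : Site d | toR y ∈ blob γ k (toR x)}

/-- The event `E_k`: the cube `S(-s_k, r_k - 1)` contains a `k`-seed. -/
def Ek (d k : ℕ) : Set (Config d) :=
  {γ | ∃ y : Site d, IsSeed γ k y ∧ ‖toR y + toR (ss d k)‖ ≤ rr d k - 1}

/-- A `k`-seed lying in the annulus `S(-s_k, r_k + s) \ S(-s_k, r_k - s)`. -/
def SeedInAnnulus {d : ℕ} (γ : Config d) (k : ℕ) (s : ℝ) (y : Site d) : Prop :=
  IsSeed γ k y ∧ ‖toR y + toR (ss d k)‖ ≤ rr d k + s ∧ rr d k - s < ‖toR y + toR (ss d k)‖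

/-- The event `U_k(s)`: `S(-s_k, r_k + s) \ S(-s_k, r_k - s)` contains a `k`-seed. -/
def Uk (d : ℕ) (k : ℕ) (s : ℝ) : Set (Config d) :=
  {γ | ∃ y : Site d, SeedInAnnulus γ k s y}

/-- The event `C_k(s) = ∪_{j ≥ k} U_j(s)`. -/
def Ck (d : ℕ) (k : ℕ) (s : ℝ) : Set (Config d) :=
  {γ | ∃ j : ℕ, k ≤ j ∧ γ ∈ Uk d j s}

/-- `±1`-valued spin `2γ(x) - 1`. -/
def pm1 {d : ℕ} (γ : Config d) (y : Site d) : ℤ := if γ y then 1 else -1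

/-- `Φ` matches maximally within clumps: a.s. every clump is finite and the number of
sites of each `k`-clump `L` matched outside `L` equals `|Σ_{x ∈ L} (2γ(x) - 1)|`. -/
def MatchesMaximally {d : ℕ} (P : Measure (Config d))
    (Φ : Config d → Site d → Site d) : Prop :=
  ∀ᵐ γ ∂P, ∀ k : ℕ, 1 ≤ k → ∀ x : Site d,
    (clump γ k x).Finite ∧
      (({y ∈ clump γ k x | Φ γ y ∉ clump γ k x}.ncard : ℤ)
        = |∑ᶠ y ∈ clump γ k x, pm1 γ y|)


namespace Stmt6
variable {d : ℕ}

def Match (T : Finset (Site d)) (q : Site d → Bool) : Set (Config d) := {γ | ∀ x ∈ T, γ x = q x}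

lemma measurable_match (T : Finset (Site d)) (q : Site d → Bool) : MeasurableSet (Match T q) := by
  have h : Match T q = ⋂ x ∈ T, (fun γ : Config d => γ x) ⁻¹' {q x} := by
    ext γ; simp [Match]
  rw [h]
  exact MeasurableSet.biInter T.countable_toSet
    (fun x _ => measurable_pi_apply x (measurableSet_singleton (q x)))

lemma prob_match_inter_fails {ι : Type*} [DecidableEq ι] (P : Measure (Config d))
    (hP : IsBernoulliHalfProduct P) (B : ι → Finset (Site d)) (p : ι → Site d → Bool)
    (s : Finset ι) (hdisj : (↑s : Set ι).PairwiseDisjoint B) :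
    ∀ (T : Finset (Site d)) (q : Site d → Bool), (∀ i ∈ s, Disjoint T (B i)) →
    P (Match T q ∩ ⋂ i ∈ s, (Match (B i) (p i))ᶜ)
      = (1/2 : ℝ≥0∞) ^ T.card * ∏ i ∈ s, (1 - (1/2 : ℝ≥0∞) ^ (B i).card) := by
  classical
  have : IsProbabilityMeasure P := hP.1
  induction s using Finset.induction_on with
  | empty =>
    intro T q _
    simp only [Finset.notMem_empty, Set.iInter_of_empty, Set.iInter_univ, Set.inter_univ,
      Finset.prod_empty, mul_one]
    exact hP.2 T q
  | @insert a s ha IH =>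
    intro T q hT
    have hdisj' : (↑s : Set ι).PairwiseDisjoint B :=
      hdisj.subset (by simp [Set.subset_insert])
    set R : Set (Config d) := ⋂ i ∈ s, (Match (B i) (p i))ᶜ with hR
    set q' : Site d → Bool := fun x => if x ∈ B a then p a x else q x with hq'
    have hTBa : Disjoint T (B a) := hT a (Finset.mem_insert_self a s)
    have hmatch_inter : Match T q ∩ Match (B a) (p a) = Match (T ∪ B a) q' := by
      ext γ
      simp only [Match, Set.mem_inter_iff, Set.mem_setOf_eq, Finset.mem_union, hq']
      constructor
      · rintro ⟨h1, h2⟩ x hx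
        by_cases hxB : x ∈ B a
        · simp [hxB, h2 x hxB]
        · simp [hxB]; exact h1 x (hx.resolve_right hxB)
      · intro h
        constructor
        · intro x hx
          have hxB : x ∉ B a := Finset.disjoint_left.mp hTBa hx
          have := h x (Or.inl hx); simpa [hxB] using this
        · intro x hx
          have := h x (Or.inr hx); simpa [hx] using this
    have hset : Match T q ∩ ⋂ i ∈ insert a s, (Match (B i) (p i))ᶜ
        = (Match T q ∩ R) \ (Match (T ∪ B a) q' ∩ R) := by
      rw [← hmatch_inter]
      ext γ
      simp only [Set.mem_inter_iff, Set.mem_diff, Set.mem_iInter, Finset.mem_insert, hR,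
        Set.mem_compl_iff]
      constructor
      · rintro ⟨h1, h2⟩
        refine ⟨⟨h1, fun i hi => h2 i (Or.inr hi)⟩, ?_⟩
        rintro ⟨⟨-, hma⟩, -⟩
        exact h2 a (Or.inl rfl) hma
      · rintro ⟨⟨h1, h2⟩, h3⟩
        refine ⟨h1, fun i hi => ?_⟩
        rcases hi with rfl | hi
        · intro hma
          exact h3 ⟨⟨h1, hma⟩, fun i hi => h2 i hi⟩
        · exact h2 i hi
    have hmeasR : MeasurableSet R :=
      MeasurableSet.biInter s.countable_toSet (fun i _ => (measurable_match _ _).compl)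
    have hsub : Match (T ∪ B a) q' ∩ R ⊆ Match T q ∩ R := by
      apply Set.inter_subset_inter_left
      intro γ hγ x hx
      have hxB : x ∉ B a := Finset.disjoint_left.mp hTBa hx
      have := hγ x (Finset.mem_union_left _ hx)
      simpa [hq', hxB] using this
    have hP1 : P (Match T q ∩ R) = (1/2 : ℝ≥0∞) ^ T.card * ∏ i ∈ s, (1 - (1/2 : ℝ≥0∞) ^ (B i).card) :=
      IH hdisj' T q (fun i hi => hT i (Finset.mem_insert_of_mem hi))
    have hBaBi : ∀ i ∈ s, Disjoint (B a) (B i) := fun i hi =>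
      hdisj (Finset.mem_insert_self a s) (by simp [hi]) (by rintro rfl; exact ha hi)
    have hP2 : P (Match (T ∪ B a) q' ∩ R)
        = (1/2 : ℝ≥0∞) ^ (T.card + (B a).card) * ∏ i ∈ s, (1 - (1/2 : ℝ≥0∞) ^ (B i).card) := by
      have := IH hdisj' (T ∪ B a) q'
        (fun i hi => Finset.disjoint_union_left.mpr ⟨hT i (Finset.mem_insert_of_mem hi), hBaBi i hi⟩)
      rwa [Finset.card_union_of_disjoint hTBa] at this
    rw [hset, measure_diff hsub ((measurable_match _ _).inter hmeasR).nullMeasurableSet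
      (measure_ne_top P _), hP1, hP2]
    rw [Finset.prod_insert ha, pow_add]
    have hprodfin : (∏ i ∈ s, (1 - (1/2 : ℝ≥0∞) ^ (B i).card)) ≠ ⊤ := by
      exact (lt_of_le_of_lt (Finset.prod_le_one (fun i _ => zero_le) (fun i _ => tsub_le_self)) one_lt_top).ne
    have h1 : (1 - (1/2 : ℝ≥0∞) ^ (B a).card) * ∏ i ∈ s, (1 - (1/2 : ℝ≥0∞) ^ (B i).card)
        = (∏ i ∈ s, (1 - (1/2 : ℝ≥0∞) ^ (B i).card))
          - (1/2 : ℝ≥0∞) ^ (B a).card * ∏ i ∈ s, (1 - (1/2 : ℝ≥0∞) ^ (B i).card) := by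
      rw [ENNReal.sub_mul (fun _ _ => hprodfin), one_mul]
    rw [h1, ENNReal.mul_sub (fun _ _ => (pow_ne_top (by norm_num)))]
    rw [mul_assoc]

lemma prob_all_fail {ι : Type*} [DecidableEq ι] (P : Measure (Config d))
    (hP : IsBernoulliHalfProduct P) (B : ι → Finset (Site d)) (p : ι → Site d → Bool)
    (s : Finset ι) (hdisj : (↑s : Set ι).PairwiseDisjoint B) :
    P {γ | ∀ i ∈ s, ¬ (∀ x ∈ B i, γ x = p i x)}
      = ∏ i ∈ s, (1 - (1/2 : ℝ≥0∞) ^ (B i).card) := by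
  have h := prob_match_inter_fails P hP B p s hdisj ∅ (fun _ => true) (by simp)
  simp only [Finset.card_empty, pow_zero, one_mul] at h
  rw [← h]
  congr 1
  ext γ
  simp [Match]


def seedPat {d : ℕ} (w : Site d) : Site d → Bool := fun y => decide (y = w)

def blockF (d : ℕ) (w : Site d) (j : ℕ) : Finset (Site d) :=
  (Finset.range j).image (fun n : ℕ => w + (n : ℤ) • e1 d)

lemma add_smul_e1_apply (w : Site d) (n : ℤ) (i : Fin d) :
    (w + n • e1 d) i = w i + (if (i : ℕ) = 0 then n else 0) := by
  have : (n • e1 d) i = n * (e1 d i) := rfl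
  by_cases h : (i : ℕ) = 0 <;> simp [Pi.add_apply, this, e1, h]

lemma mem_blockF {w c : Site d} {j : ℕ} :
    c ∈ blockF d w j ↔ ∃ n : ℕ, n < j ∧ c = w + (n : ℤ) • e1 d := by
  constructor
  · intro h
    obtain ⟨n, hn, h⟩ := Finset.mem_image.mp h
    exact ⟨n, Finset.mem_range.mp hn, h.symm⟩
  · rintro ⟨n, hn, rfl⟩
    exact Finset.mem_image.mpr ⟨n, Finset.mem_range.mpr hn, rfl⟩

lemma blockF_coord_ne {w c : Site d} {j : ℕ} (hc : c ∈ blockF d w j)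
    {i : Fin d} (hi : (i : ℕ) ≠ 0) : c i = w i := by
  obtain ⟨n, -, rfl⟩ := mem_blockF.mp hc
  rw [add_smul_e1_apply, if_neg hi, add_zero]

lemma blockF_coord_zero (hd : 0 < d) {w c : Site d} {j : ℕ} (hc : c ∈ blockF d w j) :
    w ⟨0, hd⟩ ≤ c ⟨0, hd⟩ ∧ c ⟨0, hd⟩ ≤ w ⟨0, hd⟩ + (j : ℤ) - 1 := by
  obtain ⟨n, hn, rfl⟩ := mem_blockF.mp hc
  rw [add_smul_e1_apply, if_pos rfl]
  have hn' : (n : ℤ) < (j : ℤ) := by exact_mod_cast hn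
  omega

lemma add_smul_e1_eq_self_iff (hd : 0 < d) (w : Site d) (n : ℕ) :
    w + (n : ℤ) • e1 d = w ↔ n = 0 := by
  constructor
  · intro h
    have := congrFun h ⟨0, hd⟩
    rw [add_smul_e1_apply, if_pos rfl] at this
    exact_mod_cast (by omega : (n : ℤ) = 0)
  · rintro rfl; simp

lemma card_blockF (hd : 0 < d) (w : Site d) (j : ℕ) : (blockF d w j).card = j := by
  rw [blockF, Finset.card_image_of_injOn, Finset.card_range]
  intro a _ b _ hab
  have h2 : w ⟨0, hd⟩ + ((a : ℤ)) = w ⟨0, hd⟩ + (b : ℤ) := by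
    have h3 : (w + (a : ℤ) • e1 d) ⟨0, hd⟩ = (w + (b : ℤ) • e1 d) ⟨0, hd⟩ := congrFun hab ⟨0, hd⟩
    rwa [add_smul_e1_apply, add_smul_e1_apply, if_pos rfl, if_pos rfl] at h3
  exact_mod_cast (by omega : (a : ℤ) = b)

lemma isSeed_iff_match (hd : 0 < d) (γ : Config d) {j : ℕ} (hj : 1 ≤ j) (w : Site d) :
    IsSeed γ j w ↔ ∀ x ∈ blockF d w j, γ x = seedPat w x := by
  constructor
  · rintro ⟨h1, h2⟩ x hx
    obtain ⟨n, hn, rfl⟩ := mem_blockF.mp hx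
    rcases Nat.eq_zero_or_pos n with rfl | hn1
    · simp only [Nat.cast_zero, zero_smul, add_zero]
      rw [h1, seedPat]
      exact (decide_eq_true rfl).symm
    · have hne : w + (n : ℤ) • e1 d ≠ w :=
        fun h => hn1.ne' ((add_smul_e1_eq_self_iff hd w n).mp h)
      rw [h2 n hn1 (by omega), seedPat]
      exact (decide_eq_false hne).symm
  · intro h
    constructor
    · have hw : w ∈ blockF d w j := mem_blockF.mpr ⟨0, by omega, by simp⟩
      rw [h w hw, seedPat]
      exact decide_eq_true rfl
    · intro n hn1 hn2
      have hx : w + (n : ℤ) • e1 d ∈ blockF d w j := mem_blockF.mpr ⟨n, by omega, rfl⟩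
      have hne : w + (n : ℤ) • e1 d ≠ w :=
        fun hh => (Nat.one_le_iff_ne_zero.mp hn1) ((add_smul_e1_eq_self_iff hd w n).mp hh)
      rw [h _ hx, seedPat]
      exact decide_eq_false hne

/-! Numeric facts about `rr`. -/

lemma X_nonneg (j : ℕ) : (0:ℝ) ≤ ((2 : ℝ) ^ j * (j : ℝ) ^ 2) ^ ((d : ℝ)⁻¹) :=
  Real.rpow_nonneg (by positivity) _

lemma X_pow_d (hd : 0 < d) (j : ℕ) :
    (((2 : ℝ) ^ j * (j : ℝ) ^ 2) ^ ((d : ℝ)⁻¹)) ^ d = (2 : ℝ) ^ j * (j : ℝ) ^ 2 :=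
  Real.rpow_inv_natCast_pow (by positivity) hd.ne'

lemma rr_pos (j : ℕ) : 0 < rr d j := by
  have := X_nonneg (d := d) j; rw [rr]; norm_num; linarith

/-! Candidate grids. -/

def Sj (d j : ℕ) : ℤ := ⌊rr d j⌋
def M100 (d j : ℕ) : ℤ := ⌊(100:ℝ) * rr d j⌋

def loV (d j : ℕ) : Site d := fun i => if (i:ℕ) = 0 then -(Sj d j / (j:ℤ)) else -(Sj d j)
def hiV (d j : ℕ) : Site d := fun i => if (i:ℕ) = 0 then (Sj d j / (j:ℤ)) else Sj d j

def V (d j : ℕ) : Finset (Site d) := Finset.Icc (loV d j) (hiV d j)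

def cand (x : Site d) (j : ℕ) (v : Site d) : Site d :=
  fun i => x i - ss d j i + (if (i:ℕ) = 0 then (j:ℤ) * v i else v i)

lemma ss_apply (j : ℕ) (i : Fin d) : ss d j i = if (i:ℕ) = 0 then M100 d j else 0 := by
  have : ss d j i = M100 d j * e1 d i := rfl
  rw [this, e1]
  by_cases h : (i:ℕ) = 0 <;> simp [h]

lemma Sj_le (j : ℕ) : (Sj d j : ℝ) ≤ rr d j := Int.floor_le _
lemma Sj_gt (j : ℕ) : rr d j - 1 < (Sj d j : ℝ) := Int.sub_one_lt_floor _
lemma M100_le (j : ℕ) : (M100 d j : ℝ) ≤ 100 * rr d j := Int.floor_le _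
lemma M100_gt (j : ℕ) : 100 * rr d j - 1 < (M100 d j : ℝ) := Int.sub_one_lt_floor _

lemma rr_big (hd : 0 < d) {j : ℕ} (hj : 1 ≤ j) (H : ((j:ℝ)+1)^d ≤ 2^j) :
    (j:ℝ) + 1 ≤ rr d j - 1/2 := by
  have h1 : ((j:ℝ)+1)^d ≤ (2:ℝ)^j * (j:ℝ)^2 := by
    have : (1:ℝ) ≤ (j:ℝ)^2 := by
      have : (1:ℝ) ≤ (j:ℝ) := by exact_mod_cast hj
      nlinarith
    nlinarith [pow_pos (by norm_num : (0:ℝ) < 2) j]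
  have h2 : (((j:ℝ)+1)^d) ^ ((d:ℝ)⁻¹) ≤ ((2:ℝ)^j * (j:ℝ)^2) ^ ((d:ℝ)⁻¹) :=
    Real.rpow_le_rpow (by positivity) h1 (by positivity)
  have h3 : (((j:ℝ)+1)^d : ℝ) ^ ((d:ℝ)⁻¹) = (j:ℝ)+1 :=
    Real.pow_rpow_inv_natCast (by positivity) hd.ne'
  rw [h3] at h2
  rw [rr]
  linarith

lemma Sj_ge (hd : 0 < d) {j : ℕ} (hj : 1 ≤ j) (H : ((j:ℝ)+1)^d ≤ 2^j) :
    (j : ℤ) + 1 ≤ Sj d j := by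
  apply Int.le_floor.mpr
  push_cast
  have := rr_big hd hj H
  linarith

lemma mem_V_bounds {j : ℕ} (hj : 1 ≤ j) {v : Site d} (hv : v ∈ V d j) (i : Fin d) :
    |(if (i:ℕ) = 0 then (j:ℤ) * v i else v i)| ≤ Sj d j := by
  have hS0 : (0:ℤ) ≤ Sj d j := Int.floor_nonneg.mpr (rr_pos j).le
  obtain ⟨h1, h2⟩ := Finset.mem_Icc.mp hv
  have h1i := h1 i; have h2i := h2 i
  simp only [loV, hiV] at h1i h2i
  by_cases h : (i:ℕ) = 0
  · rw [if_pos h] at h1i h2i ⊢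
    have hjpos : (0:ℤ) < (j:ℤ) := by exact_mod_cast hj
    have hds : (j:ℤ) * (Sj d j / (j:ℤ)) ≤ Sj d j := by
      rw [mul_comm]; exact Int.ediv_mul_le _ hjpos.ne'
    rw [abs_le]
    constructor
    · have : (j:ℤ) * (-(Sj d j / (j:ℤ))) ≤ (j:ℤ) * v i := by
        apply mul_le_mul_of_nonneg_left h1i hjpos.le
      nlinarith
    · calc (j:ℤ) * v i ≤ (j:ℤ) * (Sj d j / (j:ℤ)) := mul_le_mul_of_nonneg_left h2i hjpos.le
        _ ≤ Sj d j := hds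
  · rw [if_neg h] at h1i h2i ⊢
    rw [abs_le]; exact ⟨by linarith, h2i⟩

lemma card_V (hd : 0 < d) {j : ℕ} (hj : 1 ≤ j) (H : ((j:ℝ)+1)^d ≤ 2^j) :
    2 ^ j ≤ (V d j).card := by
  classical
  set S := Sj d j with hS
  set s0 := S / (j:ℤ) with hs0
  have hjZ : (0:ℤ) < (j:ℤ) := by exact_mod_cast hj
  have hSj : (j:ℤ) + 1 ≤ S := Sj_ge hd hj H
  have hs0' : (j:ℤ) * s0 ≥ S - (j:ℤ) + 1 := by
    have h := Int.emod_emod_of_dvd -- dummy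
    have h1 : S % (j:ℤ) < (j:ℤ) := Int.emod_lt_of_pos _ hjZ
    have h2 : 0 ≤ S % (j:ℤ) := Int.emod_nonneg _ hjZ.ne'
    have h3 : S = (j:ℤ) * s0 + S % (j:ℤ) := (Int.mul_ediv_add_emod S (j:ℤ)).symm
    omega
  have hcard : (V d j).card = ((2*s0+1).toNat) * ((2*S+1).toNat) ^ (d - 1) := by
    rw [V, Pi.card_Icc]
    have hcoord : ∀ i : Fin d, (Finset.Icc (loV d j i) (hiV d j i)).card
        = if (i:ℕ) = 0 then (2*s0+1).toNat else (2*S+1).toNat := by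
      intro i
      rw [Int.card_Icc, loV, hiV]
      by_cases h : (i:ℕ) = 0
      · rw [if_pos h, if_pos h, if_pos h]; congr 1; ring
      · rw [if_neg h, if_neg h, if_neg h]; congr 1; ring
    rw [Finset.prod_congr rfl (fun i _ => hcoord i), Finset.prod_ite, Finset.prod_const,
      Finset.prod_const]
    have hfil : (Finset.univ.filter (fun i : Fin d => (i:ℕ) = 0)) = {⟨0, hd⟩} := by
      ext i
      simp only [Finset.mem_filter, Finset.mem_univ, true_and, Finset.mem_singleton]
      constructor
      · intro h; exact Fin.ext h
      · rintro rfl; rfl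
    have hfil2 : (Finset.univ.filter (fun i : Fin d => ¬ (i:ℕ) = 0)).card = d - 1 := by
      have := Finset.card_filter_add_card_filter_not
        (s := (Finset.univ : Finset (Fin d))) (p := fun i : Fin d => (i:ℕ) = 0)
      rw [hfil] at this
      simp only [Finset.card_singleton, Finset.card_univ, Fintype.card_fin] at this
      omega
    rw [hfil, hfil2, Finset.card_singleton, pow_one]
  -- now the numeric bound
  have hs0pos : (1:ℤ) ≤ s0 := by
    rw [hs0]
    have : (j:ℤ) ≤ S := by omega
    exact Int.le_ediv_iff_mul_le hjZ |>.mpr (by omega)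
  have hkey : (2*(j:ℤ)) * ((2*s0+1) * (2*S+1)^(d-1)) ≥ (2*S+1)^d := by
    have h1 : (2*(j:ℤ)) * (2*s0+1) ≥ 2*S+1 := by nlinarith
    have h2 : (0:ℤ) ≤ (2*S+1)^(d-1) := pow_nonneg (by omega) _
    calc (2*(j:ℤ)) * ((2*s0+1) * (2*S+1)^(d-1)) = ((2*(j:ℤ)) * (2*s0+1)) * (2*S+1)^(d-1) := by ring
      _ ≥ (2*S+1) * (2*S+1)^(d-1) := mul_le_mul_of_nonneg_right h1 h2
      _ = (2*S+1)^d := by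
          rw [← pow_succ']
          congr 1
          omega
  -- real comparison
  have hX := X_nonneg (d := d) j
  have hc1 : (2:ℝ) * ((2:ℝ)^j * (j:ℝ)^2) ≤ ((2*S+1 : ℤ) : ℝ)^d := by
    have hSX : 2 * (((2 : ℝ) ^ j * (j : ℝ) ^ 2) ^ ((d : ℝ)⁻¹)) ≤ ((2*S+1 : ℤ):ℝ) := by
      have h1 := Sj_gt (d := d) j
      rw [rr] at h1
      push_cast
      linarith
    calc (2:ℝ) * ((2:ℝ)^j * (j:ℝ)^2)
        ≤ (2:ℝ)^d * ((2:ℝ)^j * (j:ℝ)^2) := by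
          have h2d : (2:ℝ) ≤ 2^d := by
            calc (2:ℝ) = 2^1 := (pow_one 2).symm
            _ ≤ 2^d := pow_le_pow_right₀ (by norm_num) hd
          have hY : (0:ℝ) ≤ 2^j * (j:ℝ)^2 := by positivity
          nlinarith [mul_nonneg (by linarith : (0:ℝ) ≤ 2^d - 2) hY]
      _ = (2 * (((2 : ℝ) ^ j * (j : ℝ) ^ 2) ^ ((d : ℝ)⁻¹)))^d := by
          rw [mul_pow, X_pow_d hd]
      _ ≤ ((2*S+1 : ℤ):ℝ)^d := by
          apply pow_le_pow_left₀ (by positivity) hSX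
  -- combine
  have hcombine : (2:ℝ)^j ≤ ((V d j).card : ℝ) := by
    have hZ : ((V d j).card : ℤ) = (2*s0+1) * (2*S+1)^(d-1) := by
      rw [hcard]
      push_cast
      rw [Int.toNat_of_nonneg (by omega : (0:ℤ) ≤ 2*s0+1),
        Int.toNat_of_nonneg (by omega : (0:ℤ) ≤ 2*S+1)]
    have hcardR : ((V d j).card : ℝ) = ((2*s0+1 : ℤ):ℝ) * ((2*S+1 : ℤ):ℝ)^(d-1) := by
      exact_mod_cast congrArg (Int.cast : ℤ → ℝ) hZ
    have hkeyR : (2*(j:ℝ)) * (((2*s0+1 : ℤ):ℝ) * ((2*S+1 : ℤ):ℝ)^(d-1)) ≥ ((2*S+1:ℤ):ℝ)^d := by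
      exact_mod_cast hkey
    have hj1 : (1:ℝ) ≤ (j:ℝ) := by exact_mod_cast hj
    have hjR : (0:ℝ) < (j:ℝ) := by linarith
    have h5 : (j:ℝ) * ((V d j).card : ℝ) ≥ 2^j * (j:ℝ)^2 := by
      rw [hcardR]; linarith
    have h6 : (2^j * (j:ℝ)) * (j:ℝ) ≤ ((V d j).card : ℝ) * (j:ℝ) := by
      calc (2^j * (j:ℝ)) * (j:ℝ) = 2^j * (j:ℝ)^2 := by ring
        _ ≤ (j:ℝ) * ((V d j).card : ℝ) := h5
        _ = ((V d j).card : ℝ) * (j:ℝ) := by ring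
    have h7 : (2:ℝ)^j * (j:ℝ) ≤ ((V d j).card : ℝ) := le_of_mul_le_mul_right h6 hjR
    nlinarith [pow_pos (by norm_num : (0:ℝ) < 2) j]
  exact_mod_cast hcombine

/-! Disjointness of blocks. -/

lemma Sj_nonneg (j : ℕ) : (0:ℤ) ≤ Sj d j := Int.floor_nonneg.mpr (rr_pos j).le

lemma cand_coord_ne {x v : Site d} {j : ℕ} {i : Fin d} (hi : (i:ℕ) ≠ 0) :
    cand x j v i = x i + v i := by
  simp only [cand, ss_apply, if_neg hi]; ring

lemma cand_coord_zero (hd : 0 < d) (x v : Site d) (j : ℕ) :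
    cand x j v ⟨0, hd⟩ = x ⟨0, hd⟩ - M100 d j + (j:ℤ) * v ⟨0, hd⟩ := by
  simp [cand, ss_apply]

lemma cell_range (hd : 0 < d) {x v c : Site d} {j : ℕ} (hj : 1 ≤ j)
    (hv : v ∈ V d j) (hc : c ∈ blockF d (cand x j v) j) :
    x ⟨0, hd⟩ - M100 d j - Sj d j ≤ c ⟨0, hd⟩ ∧
      c ⟨0, hd⟩ ≤ x ⟨0, hd⟩ - M100 d j + Sj d j + (j:ℤ) - 1 := by
  obtain ⟨hlo, hhi⟩ := blockF_coord_zero hd hc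
  rw [cand_coord_zero hd] at hlo hhi
  have hb := mem_V_bounds hj hv ⟨0, hd⟩
  rw [if_pos rfl] at hb
  rw [abs_le] at hb
  omega

lemma disj_within (hd : 0 < d) {x : Site d} {j : ℕ} (hj : 1 ≤ j) {v v' : Site d}
    (hv : v ∈ V d j) (hv' : v' ∈ V d j) (hne : v ≠ v') :
    Disjoint (blockF d (cand x j v) j) (blockF d (cand x j v') j) := by
  rw [Finset.disjoint_left]
  intro c hc hc'
  by_cases hcase : ∀ i : Fin d, (i:ℕ) ≠ 0 → v i = v' i
  · -- must differ at coordinate 0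
    have hne0 : v ⟨0, hd⟩ ≠ v' ⟨0, hd⟩ := by
      intro h0
      apply hne
      funext i
      by_cases hi : (i:ℕ) = 0
      · have : i = ⟨0, hd⟩ := Fin.ext hi
        rw [this]; exact h0
      · exact hcase i hi
    have h1 := blockF_coord_zero hd hc
    have h2 := blockF_coord_zero hd hc'
    rw [cand_coord_zero hd] at h1 h2
    have hjZ : (0:ℤ) < (j:ℤ) := by exact_mod_cast hj
    rcases lt_or_gt_of_ne hne0 with hlt | hlt
    · have : (j:ℤ) * v ⟨0, hd⟩ + (j:ℤ) ≤ (j:ℤ) * v' ⟨0, hd⟩ := by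
        have := mul_le_mul_of_nonneg_left (by omega : v ⟨0, hd⟩ + 1 ≤ v' ⟨0, hd⟩) hjZ.le
        nlinarith
      omega
    · have : (j:ℤ) * v' ⟨0, hd⟩ + (j:ℤ) ≤ (j:ℤ) * v ⟨0, hd⟩ := by
        have := mul_le_mul_of_nonneg_left (by omega : v' ⟨0, hd⟩ + 1 ≤ v ⟨0, hd⟩) hjZ.le
        nlinarith
      omega
  · push_neg at hcase
    obtain ⟨i, hi, hvi⟩ := hcase
    have h1 : c i = cand x j v i := blockF_coord_ne hc hi
    have h2 : c i = cand x j v' i := blockF_coord_ne hc' hi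
    rw [cand_coord_ne hi] at h1
    rw [cand_coord_ne hi] at h2
    omega

def Cnd (d j j' : ℕ) : Prop :=
  M100 d j + Sj d j < M100 d j' - Sj d j' - (j':ℤ) + 1

lemma Cnd_trans {j j' j'' : ℕ} (hj' : 1 ≤ j') (h1 : Cnd d j j') (h2 : Cnd d j' j'') :
    Cnd d j j'' := by
  have hS := Sj_nonneg (d := d) j'
  have : (1:ℤ) ≤ (j':ℤ) := by exact_mod_cast hj'
  unfold Cnd at *
  omega

lemma disj_cross (hd : 0 < d) {x : Site d} {j j' : ℕ} (hj : 1 ≤ j) (hj' : 1 ≤ j')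
    (hC : Cnd d j j') {v v' : Site d} (hv : v ∈ V d j) (hv' : v' ∈ V d j') :
    Disjoint (blockF d (cand x j v) j) (blockF d (cand x j' v') j') := by
  rw [Finset.disjoint_left]
  intro c hc hc'
  have h1 := cell_range hd hj hv hc
  have h2 := cell_range hd hj' hv' hc'
  unfold Cnd at hC
  omega

/-! Geometry: a surrounding cutter bounds the blob. -/

lemma bounded_blob_of_seed (hd : 0 < d) {γ : Config d} {k j : ℕ} (hkj : k < j) (hj : 1 ≤ j)
    {x v : Site d} (hv : v ∈ V d j) (hseed : IsSeed γ j (cand x j v)) :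
    Bornology.IsBounded (blob γ k (toR x)) := by
  set z : Site d := cand x j v + ss d j with hz
  have hzseed : IsSeed γ j (z - ss d j) := by
    rw [hz, add_sub_cancel_right]; exact hseed
  have hsub1 : {y : Fin d → ℝ | ‖y - toR z‖ = rr d j}
      ⊆ (⋃ j' ∈ {j' : ℕ | k < j'}, cutters γ j') := by
    intro y hy
    exact Set.mem_biUnion hkj (Set.mem_biUnion (show z ∈ {x : Site d | IsSeed γ j (x - ss d j)} from hzseed) hy)
  -- distance from x to the center
  have hSr : (Sj d j : ℝ) ≤ rr d j := Sj_le j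
  have hdist : ‖toR x - toR z‖ ≤ (Sj d j : ℝ) := by
    rw [pi_norm_le_iff_of_nonneg (by exact_mod_cast Sj_nonneg (d := d) j)]
    intro i
    have hzi : z i = x i + (if (i:ℕ) = 0 then (j:ℤ) * v i else v i) := by
      rw [hz]
      show cand x j v i + ss d j i = _
      simp only [cand]; ring
    have : (toR x - toR z) i = -(((if (i:ℕ) = 0 then (j:ℤ) * v i else v i) : ℤ) : ℝ) := by
      simp only [Pi.sub_apply, toR, hzi]
      push_cast; ring
    rw [this, norm_neg]
    have hb := mem_V_bounds hj hv i
    calc ‖(((if (i:ℕ) = 0 then (j:ℤ) * v i else v i) : ℤ) : ℝ)‖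
        = |(((if (i:ℕ) = 0 then (j:ℤ) * v i else v i) : ℤ) : ℝ)| := Real.norm_eq_abs _
      _ = ((|if (i:ℕ) = 0 then (j:ℤ) * v i else v i| : ℤ) : ℝ) := by rw [Int.cast_abs]
      _ ≤ ((Sj d j : ℤ) : ℝ) := by exact_mod_cast hb
  set F := (⋃ j' ∈ {j' : ℕ | k < j'}, cutters γ j')ᶜ with hF
  by_cases hp : toR x ∈ F
  · -- the blob is inside the closed ball
    have hplt : ‖toR x - toR z‖ < rr d j := by
      rcases lt_or_eq_of_le (le_trans hdist hSr) with h | h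
      · exact h
      · exfalso; exact (hF ▸ hp) (hsub1 h)
    have hsphere_sub : F ⊆ {y : Fin d → ℝ | ‖y - toR z‖ = rr d j}ᶜ := by
      rw [hF]; exact Set.compl_subset_compl.mpr hsub1
    have hblob : blob γ k (toR x) ⊆
        connectedComponentIn ({y : Fin d → ℝ | ‖y - toR z‖ = rr d j}ᶜ) (toR x) :=
      connectedComponentIn_mono _ hsphere_sub
    apply Bornology.IsBounded.subset (Metric.isBounded_closedBall (x := toR z) (r := rr d j))
    intro q hq
    have hqA := hblob hq
    set A := connectedComponentIn ({y : Fin d → ℝ | ‖y - toR z‖ = rr d j}ᶜ) (toR x) with hA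
    have hpA : toR x ∈ A := mem_connectedComponentIn (fun hmem => (hF ▸ hp) (hsub1 hmem))
    rw [Metric.mem_closedBall, dist_eq_norm]
    by_contra hq2
    push_neg at hq2
    have hcont : ContinuousOn (fun y : Fin d → ℝ => ‖y - toR z‖) A :=
      ((continuous_id.sub continuous_const).norm).continuousOn
    have hIcc : rr d j ∈ Set.Icc (‖toR x - toR z‖) (‖q - toR z‖) := ⟨hplt.le, hq2.le⟩
    obtain ⟨y, hyA, hyr⟩ :=
      (isPreconnected_connectedComponentIn).intermediate_value hpA hqA hcont hIcc
    exact (connectedComponentIn_subset _ _ hyA) hyr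
  · -- the point is not in the ambient set: the component is empty
    rw [blob, ← hF, connectedComponentIn_eq_empty hp]
    exact Bornology.isBounded_empty

/-! Choice of a threshold `J0` and the stage sequence. -/

lemma exists_J0 (d : ℕ) (hd : 0 < d) :
    ∃ J0 : ℕ, 1 ≤ J0 ∧ ∀ j : ℕ, J0 ≤ j → ((j:ℝ)+1)^d ≤ 2^j := by
  have h := tendsto_pow_const_div_const_pow_of_one_lt d (by norm_num : (1:ℝ) < 2)
  have hc : (0:ℝ) < 1 / (2^d * 2) := by positivity
  have hev : ∀ᶠ n : ℕ in Filter.atTop, (n:ℝ)^d / 2^n < 1/(2^d*2) :=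
    Filter.Tendsto.eventually_lt_const hc h
  obtain ⟨N, hN⟩ := Filter.eventually_atTop.mp hev
  refine ⟨max N 1, le_max_right _ _, fun j hj => ?_⟩
  have hjN : N ≤ j := le_trans (le_max_left _ _) hj
  have hj1 : 1 ≤ j := le_trans (le_max_right _ _) hj
  have h1 := hN j hjN
  have h2pos : (0:ℝ) < 2^j := by positivity
  have h2dpos : (0:ℝ) < 2^d := by positivity
  have h3 : ((j:ℝ)+1)^d ≤ (2*(j:ℝ))^d := by
    apply pow_le_pow_left₀ (by positivity)
    have : (1:ℝ) ≤ (j:ℝ) := by exact_mod_cast hj1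
    linarith
  have h4 : (2*(j:ℝ))^d = 2^d * (j:ℝ)^d := by rw [mul_pow]
  have h5 : (j:ℝ)^d < 2^j / (2^d*2) := by
    rw [div_lt_iff₀ h2pos] at h1
    rw [lt_div_iff₀ (by positivity : (0:ℝ) < 2^d*2)]
    calc (j:ℝ)^d * (2^d*2) < (1/(2^d*2) * 2^j) * (2^d*2) :=
          mul_lt_mul_of_pos_right h1 (by positivity)
      _ = 2^j := by field_simp
  have h7 := mul_lt_mul_of_pos_left h5 h2dpos
  have h6 : (2:ℝ)^d * (2^j / (2^d*2)) = 2^j/2 := by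
    field_simp
  linarith

lemma ennreal_stage {j n : ℕ} (hn : 2^j ≤ n) : (1 - (1/2:ℝ≥0∞)^j)^n ≤ 1/2 := by
  have h12 : ENNReal.ofReal ((1:ℝ)/2) = (1/2 : ℝ≥0∞) := by
    rw [ENNReal.ofReal_div_of_pos (by norm_num), ENNReal.ofReal_one, ENNReal.ofReal_ofNat]
  have hofr : (1 - (1/2:ℝ≥0∞)^j) = ENNReal.ofReal (1 - (1/2:ℝ)^j) := by
    rw [ENNReal.ofReal_sub _ (by positivity), ENNReal.ofReal_one, ENNReal.ofReal_pow (by norm_num),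
      h12]
  have ha0 : (0:ℝ) ≤ 1 - (1/2:ℝ)^j := by
    have : (1/2:ℝ)^j ≤ 1 := pow_le_one₀ (by norm_num) (by norm_num)
    linarith
  have ha1 : (1 - (1/2:ℝ)^j) ≤ 1 := by
    have : (0:ℝ) ≤ (1/2:ℝ)^j := by positivity
    linarith
  rw [hofr, ← ENNReal.ofReal_pow ha0]
  have hreal : (1 - (1/2:ℝ)^j)^n ≤ 1/2 := by
    have h1 : (1 - (1/2:ℝ)^j)^n ≤ (1 - (1/2:ℝ)^j)^(2^j) :=
      pow_le_pow_of_le_one ha0 ha1 hn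
    have h2 : (1 - (1/2:ℝ)^j) ≤ Real.exp (-(1/2:ℝ)^j) := by
      have := Real.add_one_le_exp (-(1/2:ℝ)^j)
      linarith
    have h3 : (1 - (1/2:ℝ)^j)^(2^j) ≤ (Real.exp (-(1/2:ℝ)^j))^(2^j) :=
      pow_le_pow_left₀ ha0 h2 _
    have h4 : (Real.exp (-(1/2:ℝ)^j))^(2^j) = Real.exp (((2:ℝ)^j) * (-(1/2:ℝ)^j)) := by
      rw [← Real.exp_nat_mul]
      norm_num
    have h5 : ((2:ℝ)^j) * (-(1/2:ℝ)^j) = -1 := by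
      rw [div_pow, one_pow]
      field_simp
    have h6 : Real.exp (-1) ≤ 1/2 := by
      have h7 : (2:ℝ) ≤ Real.exp 1 := by
        have := Real.add_one_le_exp (1:ℝ); linarith
      rw [Real.exp_neg]
      have h8 : (0:ℝ) < Real.exp 1 := Real.exp_pos 1
      rw [inv_eq_one_div]
      rw [div_le_div_iff₀ h8 (by norm_num)]
      linarith
    calc (1 - (1/2:ℝ)^j)^n ≤ (1 - (1/2:ℝ)^j)^(2^j) := h1
      _ ≤ (Real.exp (-(1/2:ℝ)^j))^(2^j) := h3
      _ = Real.exp (((2:ℝ)^j) * (-(1/2:ℝ)^j)) := h4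
      _ = Real.exp (-1) := by rw [h5]
      _ ≤ 1/2 := h6
  calc ENNReal.ofReal ((1 - (1/2:ℝ)^j)^n) ≤ ENNReal.ofReal (1/2) := ENNReal.ofReal_le_ofReal hreal
    _ = 1/2 := h12

/-! The stage sequence. -/

def nextj (d J0 j : ℕ) : ℕ := max (max J0 (j+1)) (⌈(2:ℝ) * rr d j⌉₊ + 1)

lemma nextj_spec (hd : 0 < d) {J0 : ℕ} (hJ0 : 1 ≤ J0)
    (HJ0 : ∀ j : ℕ, J0 ≤ j → ((j:ℝ)+1)^d ≤ 2^j) {j : ℕ} (hj : 1 ≤ j) :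
    j < nextj d J0 j ∧ J0 ≤ nextj d J0 j ∧ Cnd d j (nextj d J0 j) := by
  set j' := nextj d J0 j with hj'
  have h1 : j < j' :=
    lt_of_lt_of_le (Nat.lt_succ_self j) (le_trans (le_max_right _ _) (le_max_left _ _))
  have h2 : J0 ≤ j' := le_trans (le_max_left _ _) (le_max_left _ _)
  have h3 : (⌈(2:ℝ) * rr d j⌉₊ + 1 : ℕ) ≤ j' := le_max_right _ _
  refine ⟨h1, h2, ?_⟩
  have hj'1 : 1 ≤ j' := le_trans hJ0 h2
  have hbig := rr_big hd hj'1 (HJ0 j' h2)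
  have hceil : (2:ℝ) * rr d j ≤ (⌈(2:ℝ) * rr d j⌉₊ : ℝ) := Nat.le_ceil _
  have hj'R : ((⌈(2:ℝ) * rr d j⌉₊ : ℝ) + 1) ≤ (j' : ℝ) := by exact_mod_cast h3
  have hrrj := rr_pos (d := d) j
  have hrr' : 2 * rr d j + 1 ≤ rr d j' := by linarith
  have hreal : ((M100 d j : ℝ) + (Sj d j : ℝ)) < (M100 d j' : ℝ) - (Sj d j' : ℝ) - (j' : ℝ) + 1 := by
    have hM := M100_le (d := d) j
    have hM2 := M100_gt (d := d) j'
    have hS1 := Sj_le (d := d) j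
    have hS2 := Sj_le (d := d) j'
    have hjr' : (j' : ℝ) ≤ rr d j' - 3/2 := by linarith
    linarith
  rw [Cnd, ← @Int.cast_lt ℝ]
  push_cast
  push_cast at hreal
  linarith

def jseq (d J0 : ℕ) : ℕ → ℕ
  | 0 => J0
  | m+1 => nextj d J0 (jseq d J0 m)

section
variable (hd : 0 < d) {J0 : ℕ} (hJ0 : 1 ≤ J0)
  (HJ0 : ∀ j : ℕ, J0 ≤ j → ((j:ℝ)+1)^d ≤ 2^j)
include hd hJ0 HJ0

lemma jseq_J0 : ∀ m, J0 ≤ jseq d J0 m := by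
  intro m
  induction m with
  | zero => exact le_refl _
  | succ m ih => exact (nextj_spec hd hJ0 HJ0 (le_trans hJ0 ih)).2.1

lemma jseq_one (m : ℕ) : 1 ≤ jseq d J0 m := le_trans hJ0 (jseq_J0 hd hJ0 HJ0 m)

lemma jseq_lt (m : ℕ) : jseq d J0 m < jseq d J0 (m+1) :=
  (nextj_spec hd hJ0 HJ0 (jseq_one hd hJ0 HJ0 m)).1

lemma jseq_ge_self (m : ℕ) : m ≤ jseq d J0 m := by
  induction m with
  | zero => exact Nat.zero_le _
  | succ m ih => exact Nat.succ_le_of_lt (lt_of_le_of_lt ih (jseq_lt hd hJ0 HJ0 m))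

lemma jseq_Cnd : ∀ m m', m < m' → Cnd d (jseq d J0 m) (jseq d J0 m') := by
  intro m m'
  induction m' with
  | zero => intro h; omega
  | succ k ih =>
    intro h
    rcases Nat.lt_succ_iff_lt_or_eq.mp h with h' | h'
    · exact Cnd_trans (jseq_one hd hJ0 HJ0 k) (ih h')
        ((nextj_spec hd hJ0 HJ0 (jseq_one hd hJ0 HJ0 k)).2.2)
    · subst h'
      exact (nextj_spec hd hJ0 HJ0 (jseq_one hd hJ0 HJ0 m)).2.2

/-! The key null set. -/

lemma stage_null (P : Measure (Config d)) (hP : IsBernoulliHalfProduct P)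
    (x : Site d) (M : ℕ) :
    P {γ : Config d | ∀ m : ℕ, M ≤ m → ∀ v ∈ V d (jseq d J0 m),
        ¬ IsSeed γ (jseq d J0 m) (cand x (jseq d J0 m) v)} = 0 := by
  classical
  have hprob : IsProbabilityMeasure P := hP.1
  set jq := jseq d J0 with hjq
  set N := {γ : Config d | ∀ m : ℕ, M ≤ m → ∀ v ∈ V d (jq m),
        ¬ IsSeed γ (jq m) (cand x (jq m) v)} with hN
  have key : ∀ n : ℕ, P N ≤ (1/2 : ℝ≥0∞)^(n+1) := by
    intro n
    set pairs : Finset (ℕ × Site d) :=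
      (Finset.Icc M (M+n)).biUnion (fun m => (V d (jq m)).image (fun v => (m, v))) with hpairs
    set B : ℕ × Site d → Finset (Site d) :=
      fun p => blockF d (cand x (jq p.1) p.2) (jq p.1) with hB
    set pat : ℕ × Site d → Site d → Bool :=
      fun p => seedPat (cand x (jq p.1) p.2) with hpat
    have hmem : ∀ p ∈ pairs, p.1 ∈ Finset.Icc M (M+n) ∧ p.2 ∈ V d (jq p.1) := by
      intro p hp
      obtain ⟨m, hm, hp2⟩ := Finset.mem_biUnion.mp hp
      obtain ⟨v, hv, rfl⟩ := Finset.mem_image.mp hp2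
      exact ⟨hm, hv⟩
    have hdisjB : (↑pairs : Set (ℕ × Site d)).PairwiseDisjoint B := by
      rintro ⟨ma, va⟩ ha ⟨mb, vb⟩ hb hab
      obtain ⟨ha1, ha2⟩ := hmem _ ha
      obtain ⟨hb1, hb2⟩ := hmem _ hb
      simp only at ha2 hb2
      show Disjoint (blockF d (cand x (jq ma) va) (jq ma)) (blockF d (cand x (jq mb) vb) (jq mb))
      rcases lt_trichotomy ma mb with h | rfl | h
      · exact disj_cross hd (jseq_one hd hJ0 HJ0 ma) (jseq_one hd hJ0 HJ0 mb)
          (jseq_Cnd hd hJ0 HJ0 _ _ h) ha2 hb2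
      · have hv : va ≠ vb := fun hv2 => hab (by rw [hv2])
        exact disj_within hd (jseq_one hd hJ0 HJ0 ma) ha2 hb2 hv
      · exact (disj_cross hd (jseq_one hd hJ0 HJ0 mb) (jseq_one hd hJ0 HJ0 ma)
          (jseq_Cnd hd hJ0 HJ0 _ _ h) hb2 ha2).symm
    have hsub : N ⊆ {γ : Config d | ∀ i ∈ pairs, ¬ (∀ y ∈ B i, γ y = pat i y)} := by
      intro γ hγ i hi
      obtain ⟨hi1, hi2⟩ := hmem i hi
      have hM' : M ≤ i.1 := (Finset.mem_Icc.mp hi1).1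
      have hns := hγ i.1 hM' i.2 hi2
      rw [isSeed_iff_match hd γ (jseq_one hd hJ0 HJ0 i.1) (cand x (jq i.1) i.2)] at hns
      exact hns
    calc P N ≤ P {γ : Config d | ∀ i ∈ pairs, ¬ (∀ y ∈ B i, γ y = pat i y)} :=
          measure_mono hsub
      _ = ∏ i ∈ pairs, (1 - (1/2 : ℝ≥0∞) ^ (B i).card) := prob_all_fail P hP B pat pairs hdisjB
      _ = ∏ m ∈ Finset.Icc M (M+n), ∏ p ∈ (V d (jq m)).image (fun v => (m, v)),
            (1 - (1/2 : ℝ≥0∞) ^ (B p).card) := by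
          rw [hpairs]
          apply Finset.prod_biUnion
          intro m hm m' hm' hmm'
          show Disjoint ((V d (jq m)).image (fun v => (m, v)))
            ((V d (jq m')).image (fun v => (m', v)))
          rw [Finset.disjoint_left]
          intro p hp hp'
          obtain ⟨v, hv, rfl⟩ := Finset.mem_image.mp hp
          obtain ⟨v', hv', h⟩ := Finset.mem_image.mp hp'
          exact hmm' (congrArg Prod.fst h).symm
      _ ≤ ∏ m ∈ Finset.Icc M (M+n), (1/2 : ℝ≥0∞) := by
          apply Finset.prod_le_prod'
          intro m hm
          have himg : ∏ p ∈ (V d (jq m)).image (fun v => (m, v)),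
              (1 - (1/2 : ℝ≥0∞) ^ (B p).card)
              = ∏ v ∈ V d (jq m), (1 - (1/2 : ℝ≥0∞) ^ (B (m, v)).card) := by
            apply Finset.prod_image
            intro v _ v' _ h
            exact (Prod.ext_iff.mp h).2
          rw [himg]
          have hcards : ∀ v ∈ V d (jq m), (1 - (1/2 : ℝ≥0∞) ^ (B (m, v)).card)
              = (1 - (1/2 : ℝ≥0∞) ^ (jq m)) := by
            intro v _
            rw [hB]
            simp only
            rw [card_blockF hd]
          rw [Finset.prod_congr rfl hcards, Finset.prod_const]
          exact ennreal_stage (card_V hd (jseq_one hd hJ0 HJ0 m) (HJ0 _ (jseq_J0 hd hJ0 HJ0 m)))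
      _ = (1/2 : ℝ≥0∞)^(n+1) := by
          rw [Finset.prod_const, Nat.card_Icc]
          congr 1
          omega
  have htend : Filter.Tendsto (fun n : ℕ => (1/2 : ℝ≥0∞)^(n+1)) Filter.atTop (nhds 0) := by
    have h0 : Filter.Tendsto (fun n : ℕ => (1/2 : ℝ≥0∞)^n) Filter.atTop (nhds 0) :=
      ENNReal.tendsto_pow_atTop_nhds_zero_of_lt_one (by norm_num)
    exact h0.comp (Filter.tendsto_add_atTop_nat 1)
  exact le_antisymm (ge_of_tendsto htend (Filter.Eventually.of_forall key)) (zero_le)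

end

end Stmt6

/-- Almost surely, every `k`-blob containing a lattice point is bounded. -/

theorem statement6 (d : ℕ) (hd : 1 ≤ d)
    (P : Measure (Config d)) (hP : IsBernoulliHalfProduct P) :
    ∀ᵐ γ ∂P, ∀ k : ℕ, 1 ≤ k → ∀ x : Site d,
      Bornology.IsBounded (blob γ k (toR x)) := by
  classical
  obtain ⟨J0, hJ0, HJ0⟩ := Stmt6.exists_J0 d hd
  set N : Site d → ℕ → Set (Config d) := fun x M =>
    {γ : Config d | ∀ m : ℕ, M ≤ m → ∀ v ∈ Stmt6.V d (Stmt6.jseq d J0 m),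
        ¬ IsSeed γ (Stmt6.jseq d J0 m) (Stmt6.cand x (Stmt6.jseq d J0 m) v)} with hNdef
  have hnull : P (⋃ (x : Site d) (M : ℕ), N x M) = 0 := by
    rw [measure_iUnion_null_iff]
    intro x
    rw [measure_iUnion_null_iff]
    intro M
    exact Stmt6.stage_null hd hJ0 HJ0 P hP x M
  rw [MeasureTheory.ae_iff]
  apply measure_mono_null _ hnull
  intro γ hγ
  simp only [Set.mem_setOf_eq] at hγ
  by_contra hcon
  simp only [Set.mem_iUnion, not_exists] at hcon
  apply hγ
  intro k _ x
  have hx := hcon x (k+1)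
  rw [hNdef] at hx
  simp only [Set.mem_setOf_eq] at hx
  push_neg at hx
  obtain ⟨m, hm, v, hv, hseed⟩ := hx
  have hkj : k < Stmt6.jseq d J0 m :=
    lt_of_lt_of_le (Nat.lt_of_lt_of_le (Nat.lt_succ_self k) hm)
      (Stmt6.jseq_ge_self hd hJ0 HJ0 m)
  exact Stmt6.bounded_blob_of_seed hd hkj (Stmt6.jseq_one hd hJ0 HJ0 m) hv hseed

end
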